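/- Under the stated operator setting, let 2 ≤ k ≤ p, set E = span{η₁, …, η_{k−1}} and Q = span{q₁, …, q_k}, and assume the quantity D = (μ_{k−1}/μ_k) · (1 − d_2(E, Φ)²) − ⟨η_k, q_k⟩² is positive. Then for every nonzero q ∈ Q, ⟨q, T q⟩/⟨q, q⟩ ≥ μ_k · (⟨η_k, q_k⟩² − 1/D). -/

import Mathlib

open scoped RealInnerProductSpace ENNReal
open Submodule Filter

noncomputable section

variable {H : Type*} [NormedAddCommGroup H] [InnerProductSpace ℝ H] [CompleteSpace H]

/-- Orthogonal projection onto `U`, as an operator `H → H` (defined to be `0` in the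
degenerate case where `U` admits no orthogonal projection). -/
noncomputable def proj (U : Submodule ℝ H) : H →L[ℝ] H := by
  classical
  exact if h : HasOrthogonalProjection U then
    (haveI := h; U.subtypeL ∘L orthogonalProjection U)
  else 0

/-- Squared Hilbert–Schmidt norm of an operator, computed in a fixed Hilbert basis of `H`. -/
noncomputable def hsNormSq (A : H →L[ℝ] H) : ℝ≥0∞ :=
  ∑' i : (exists_hilbertBasis ℝ H).choose,
    (‖A ((exists_hilbertBasis ℝ H).choose_spec.choose i)‖₊ : ℝ≥0∞) ^ 2

/-- Hilbert–Schmidt (Frobenius) norm of an operator. -/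
noncomputable def hsNorm (A : H →L[ℝ] H) : ℝ := Real.sqrt (hsNormSq A).toReal

/-- Projection distance `d_F(U, W) = ‖P_{Wᗮ} P_U‖_F`. -/
noncomputable def dF (U W : Submodule ℝ H) : ℝ := hsNorm ((proj Wᗮ) ∘L (proj U))

/-- Gap distance `d₂(U, W) = ‖P_{Wᗮ} P_U‖₂`. -/
noncomputable def d2 (U W : Submodule ℝ H) : ℝ := ‖(proj Wᗮ) ∘L (proj U)‖


set_option linter.unusedSectionVars false

lemma proj_apply (U : Submodule ℝ H) [h : HasOrthogonalProjection U] (x : H) :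
    proj U x = (orthogonalProjection U x : H) := by
  simp [proj, dif_pos h]

lemma aux_delta (s : Finset ℕ) (q : ℕ → H)
    (h : ∀ i ∈ s, ∀ j ∈ s, ⟪q i, q j⟫ = if i = j then (1:ℝ) else 0)
    (c : ℕ → ℝ) {j : ℕ} (hj : j ∈ s) :
    ⟪∑ i ∈ s, c i • q i, q j⟫ = c j := by
  rw [sum_inner]
  have hterm : ∀ i ∈ s, ⟪c i • q i, q j⟫ = if j = i then c i else 0 := by
    intro i hi
    rw [real_inner_smul_left, h i hi j hj]
    by_cases e : i = j
    · subst e; simp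
    · simp [e, Ne.symm e]
  rw [Finset.sum_congr rfl hterm, Finset.sum_ite_eq, if_pos hj]


lemma aux_sumsq (s : Finset ℕ) (q : ℕ → H)
    (h : ∀ i ∈ s, ∀ j ∈ s, ⟪q i, q j⟫ = if i = j then (1:ℝ) else 0)
    (c : ℕ → ℝ) :
    ⟪∑ i ∈ s, c i • q i, ∑ i ∈ s, c i • q i⟫ = ∑ i ∈ s, c i ^ 2 := by
  rw [inner_sum]
  refine Finset.sum_congr rfl fun j hj => ?_
  rw [real_inner_smul_right]
  rw [aux_delta s q h c hj, sq]

lemma aux_inner_span_zero {s : Set H} {x : H} (h : ∀ y ∈ s, ⟪x, y⟫ = 0) :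
    ∀ v ∈ span ℝ s, ⟪x, v⟫ = 0 := by
  intro v hv
  induction hv using Submodule.span_induction with
  | mem y hy => exact h y hy
  | zero => simp
  | add a b _ _ ha hb => rw [inner_add_right, ha, hb, add_zero]
  | smul t a _ ha => rw [real_inner_smul_right, ha, mul_zero]

lemma aux_bessel (s : Finset ℕ) (η : ℕ → H)
    (h : ∀ i ∈ s, ∀ j ∈ s, ⟪η i, η j⟫ = if i = j then (1:ℝ) else 0) (u : H) :
    ∑ i ∈ s, ⟪η i, u⟫ ^ 2 ≤ ⟪u, u⟫ := by
  set z := ∑ i ∈ s, ⟪η i, u⟫ • η i with hzdef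
  have h1 : ∀ x : H, ⟪z, x⟫ = ∑ i ∈ s, ⟪η i, u⟫ * ⟪η i, x⟫ := by
    intro x
    rw [hzdef, sum_inner]
    exact Finset.sum_congr rfl fun i _ => real_inner_smul_left _ _ _
  have h2 : ∀ i ∈ s, ⟪η i, z⟫ = ⟪η i, u⟫ := by
    intro i hi
    rw [hzdef, inner_sum]
    have : ∀ j ∈ s, ⟪η i, ⟪η j, u⟫ • η j⟫ = if i = j then ⟪η j, u⟫ else 0 := by
      intro j hj
      rw [real_inner_smul_right, h i hi j hj]
      by_cases hij : i = j <;> simp [hij]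
    rw [Finset.sum_congr rfl this, Finset.sum_ite_eq, if_pos hi]
  have hzz : ⟪z, z⟫ = ∑ i ∈ s, ⟪η i, u⟫ ^ 2 := by
    rw [h1 z]
    refine Finset.sum_congr rfl fun i hi => ?_
    rw [h2 i hi, sq]
  have hzu : ⟪z, u⟫ = ∑ i ∈ s, ⟪η i, u⟫ ^ 2 := by
    rw [h1 u]
    exact Finset.sum_congr rfl fun i _ => (sq _).symm
  have h0 : (0:ℝ) ≤ ⟪u - z, u - z⟫ := real_inner_self_nonneg
  have hexp : ⟪u - z, u - z⟫ = ⟪u, u⟫ - 2 * ⟪z, u⟫ + ⟪z, z⟫ := by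
    rw [inner_sub_left, inner_sub_right, inner_sub_right, real_inner_comm u z]
    ring
  rw [hexp, hzz, hzu] at h0
  linarith

lemma aux_scalar {R g c S a t X2 : ℝ} (hR : 1 ≤ R) (hg : g ≤ 1) (hc : c ^ 2 ≤ 1)
    (hD : 0 < R * g - c ^ 2) (hS : 0 ≤ S) (hX : g * S ≤ X2) (ht : X2 + t ^ 2 ≤ S) :
    (c ^ 2 - 1 / (R * g - c ^ 2)) * (S + a ^ 2) ≤ R * X2 + (a * c + t) ^ 2 := by
  set D := R * g - c ^ 2 with hDdef
  have hgpos : 0 < g := by nlinarith [sq_nonneg c]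
  have hR0 : (0:ℝ) ≤ R := le_trans zero_le_one hR
  have hX0 : 0 ≤ X2 := le_trans (by positivity) hX
  have hF : 0 ≤ R * X2 * D + (a * c + t) ^ 2 * D + (1 - c ^ 2 * D) * (S + a ^ 2) := by
    rcases le_or_gt (c ^ 2 * D) 1 with hcase | hcase
    · have hA := sq_nonneg (a + D * c * t)
      have h1 : 0 ≤ R * X2 * D := mul_nonneg (mul_nonneg hR0 hX0) hD.le
      have h2 : 0 ≤ D * t ^ 2 * (1 - D * c ^ 2) :=
        mul_nonneg (mul_nonneg hD.le (sq_nonneg t)) (by nlinarith)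
      have h3 : 0 ≤ S * (1 - c ^ 2 * D) := mul_nonneg hS (by linarith)
      have hident : R * X2 * D + (a * c + t) ^ 2 * D + (1 - c ^ 2 * D) * (S + a ^ 2) =
          (a + D * c * t) ^ 2 + R * X2 * D + D * t ^ 2 * (1 - D * c ^ 2) +
            S * (1 - c ^ 2 * D) := by ring
      linarith
    · have hA := sq_nonneg (a + D * c * t)
      have hB : 0 ≤ D * (S - X2 - t ^ 2) * (c ^ 2 * D - 1) :=
        mul_nonneg (mul_nonneg hD.le (by linarith)) (by linarith)
      have hC : 0 ≤ (X2 - g * S) * D * (R - 1 + D * c ^ 2) :=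
        mul_nonneg (mul_nonneg (by linarith) hD.le) (by nlinarith [sq_nonneg c])
      have hK : 0 ≤ S * (D ^ 2 * (1 - c ^ 2 * (1 - g)) + D * (1 - g) + 1) := by
        have : (0:ℝ) ≤ 1 - c ^ 2 * (1 - g) := by nlinarith
        have : (0:ℝ) ≤ D ^ 2 * (1 - c ^ 2 * (1 - g)) := by positivity
        have : (0:ℝ) ≤ D * (1 - g) := mul_nonneg hD.le (by linarith)
        exact mul_nonneg hS (by linarith)
      have hident : R * X2 * D + (a * c + t) ^ 2 * D + (1 - c ^ 2 * D) * (S + a ^ 2) =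
          (a + D * c * t) ^ 2 + D * (S - X2 - t ^ 2) * (c ^ 2 * D - 1) +
            (X2 - g * S) * D * (R - 1 + D * c ^ 2) +
            S * (D ^ 2 * (1 - c ^ 2 * (1 - g)) + D * (1 - g) + 1) := by
        rw [hDdef]; ring
      linarith
  rw [← mul_le_mul_iff_of_pos_right hD]
  have hid : (c ^ 2 - 1 / D) * (S + a ^ 2) * D = c ^ 2 * D * (S + a ^ 2) - (S + a ^ 2) := by
    field_simp
  rw [hid]
  nlinarith [hF]

lemma aux_gs (Φ : Submodule ℝ H) (η f q : ℕ → H) (p : ℕ)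
    (hfΦ : ∀ i, f i ∈ Φ)
    (hfη : ∀ i, ∀ x ∈ Φ, ⟪x, η i⟫ = ⟪x, f i⟫)
    (hlin : ∀ i ∈ Set.Icc 1 p, f i ∉ span ℝ (f '' Set.Ico 1 i))
    (hq : ∀ i ∈ Set.Icc 1 p, q i = ‖f i - ∑ l ∈ Finset.Ico 1 i, ⟪q l, η i⟫ • q l‖⁻¹ •
          (f i - ∑ l ∈ Finset.Ico 1 i, ⟪q l, η i⟫ • q l)) :
    ∀ i ∈ Set.Icc 1 p, q i ∈ Φ ∧ ‖q i‖ = 1 ∧ q i ∈ span ℝ (f '' Set.Icc 1 i) ∧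
      f i ∈ span ℝ (q '' Set.Icc 1 i) ∧ ∀ j, 1 ≤ j → j < i → ⟪q j, q i⟫ = 0 := by
  intro i
  induction i using Nat.strong_induction_on with
  | _ i IH =>
  intro hi
  obtain ⟨hi1, hip⟩ := hi
  have hIco : ∀ l ∈ Finset.Ico 1 i, l ∈ Set.Icc 1 p ∧ l < i := by
    intro l hl
    rw [Finset.mem_Ico] at hl
    exact ⟨⟨hl.1, le_trans (Nat.le_of_lt_succ (Nat.lt_succ_of_lt hl.2)) hip⟩, hl.2⟩
  set v := f i - ∑ l ∈ Finset.Ico 1 i, ⟪q l, η i⟫ • q l with hv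
  have hvΦ : v ∈ Φ := by
    refine sub_mem (hfΦ i) (sum_mem fun l hl => smul_mem _ _ ?_)
    exact (IH l (hIco l hl).2 (hIco l hl).1).1
  have hqspan : ∀ l ∈ Finset.Ico 1 i, q l ∈ span ℝ (f '' Set.Ico 1 i) := by
    intro l hl
    obtain ⟨⟨hl1, hlp⟩, hli⟩ := hIco l hl
    refine span_mono (Set.image_mono ?_) (IH l hli ⟨hl1, hlp⟩).2.2.1
    intro x hx
    exact ⟨hx.1, lt_of_le_of_lt hx.2 hli⟩
  have hvne : v ≠ 0 := by
    intro h0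
    apply hlin i ⟨hi1, hip⟩
    have : f i = ∑ l ∈ Finset.Ico 1 i, ⟪q l, η i⟫ • q l := by
      rwa [sub_eq_zero] at h0
    rw [this]
    exact sum_mem fun l hl => smul_mem _ _ (hqspan l hl)
  have hqi : q i = ‖v‖⁻¹ • v := hq i ⟨hi1, hip⟩
  have hnv : ‖v‖ ≠ 0 := norm_ne_zero_iff.2 hvne
  have hqnorm : ‖q i‖ = 1 := by
    rw [hqi, norm_smul, norm_inv, norm_norm, inv_mul_cancel₀ hnv]
  have hqiΦ : q i ∈ Φ := by rw [hqi]; exact smul_mem _ _ hvΦ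
  have hqispan : q i ∈ span ℝ (f '' Set.Icc 1 i) := by
    rw [hqi]
    refine smul_mem _ _ (sub_mem ?_ (sum_mem fun l hl => smul_mem _ _ ?_))
    · exact subset_span ⟨i, ⟨hi1, le_refl i⟩, rfl⟩
    · refine span_mono (Set.image_mono ?_) (hqspan l hl)
      intro x hx
      exact ⟨hx.1, le_of_lt hx.2⟩
  have hveq : v = ‖v‖ • q i := by
    rw [hqi, smul_smul, mul_inv_cancel₀ hnv, one_smul]
  have hfspan : f i ∈ span ℝ (q '' Set.Icc 1 i) := by
    have : f i = ‖v‖ • q i + ∑ l ∈ Finset.Ico 1 i, ⟪q l, η i⟫ • q l := by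
      rw [← hveq, hv]; abel
    rw [this]
    refine add_mem (smul_mem _ _ (subset_span ⟨i, ⟨hi1, le_refl i⟩, rfl⟩))
      (sum_mem fun l hl => smul_mem _ _ (subset_span ⟨l, ⟨(hIco l hl).1.1,
        le_of_lt (hIco l hl).2⟩, rfl⟩))
  refine ⟨hqiΦ, hqnorm, hqispan, hfspan, ?_⟩
  intro j hj1 hji
  have hjp : j ∈ Set.Icc 1 p := ⟨hj1, le_trans (le_of_lt hji) hip⟩
  have hjIco : j ∈ Finset.Ico 1 i := Finset.mem_Ico.2 ⟨hj1, hji⟩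
  have horthIco : ∀ l ∈ Finset.Ico 1 i, ∀ l' ∈ Finset.Ico 1 i,
      ⟪q l, q l'⟫ = if l = l' then (1:ℝ) else 0 := by
    intro l hl l' hl'
    obtain ⟨hlp, hli⟩ := hIco l hl
    obtain ⟨hl'p, hl'i⟩ := hIco l' hl'
    rcases lt_trichotomy l l' with h | h | h
    · rw [if_neg (Nat.ne_of_lt h)]
      exact (IH l' hl'i hl'p).2.2.2.2 l hlp.1 h
    · subst h
      rw [if_pos rfl, real_inner_self_eq_norm_sq, (IH l hli hlp).2.1, one_pow]
    · rw [if_neg (Nat.ne_of_gt h), real_inner_comm]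
      exact (IH l hli hlp).2.2.2.2 l' hl'p.1 h
  have hsum : ⟪∑ l ∈ Finset.Ico 1 i, ⟪q l, η i⟫ • q l, q j⟫ = ⟪q j, η i⟫ :=
    aux_delta _ _ horthIco _ hjIco
  have hqjv : ⟪q j, v⟫ = 0 := by
    have h1 : ⟪q j, ∑ l ∈ Finset.Ico 1 i, ⟪q l, η i⟫ • q l⟫ = ⟪q j, η i⟫ := by
      rw [real_inner_comm]; exact hsum
    have h2 : ⟪q j, f i⟫ = ⟪q j, η i⟫ := (hfη i (q j) (IH j hji hjp).1).symm
    rw [hv, inner_sub_right, h1, h2, sub_self]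
  rw [hqi, real_inner_smul_right, hqjv, mul_zero]

lemma aux_claimA (T : H →L[ℝ] H) (hTsa : ∀ x y : H, ⟪T x, y⟫ = ⟪x, T y⟫)
    (hTpos : ∀ u : H, 0 ≤ ⟪u, T u⟫) (r : ℕ) (η : ℕ → H) (μ : ℕ → ℝ)
    (hη : ∀ i ∈ Finset.Icc 1 r, ∀ j ∈ Finset.Icc 1 r,
      ⟪η i, η j⟫ = if i = j then (1:ℝ) else 0)
    (hTeig : ∀ i ∈ Finset.Icc 1 r, T (η i) = μ i • η i) (u : H) :
    ∑ i ∈ Finset.Icc 1 r, μ i * ⟪η i, u⟫ ^ 2 ≤ ⟪u, T u⟫ := by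
  set s := Finset.Icc 1 r with hs
  set z := ∑ i ∈ s, ⟪η i, u⟫ • η i with hz
  set w := u - z with hw
  have hzη : ∀ j ∈ s, ⟪z, η j⟫ = ⟪η j, u⟫ := fun j hj => aux_delta s η hη _ hj
  have hwη : ∀ j ∈ s, ⟪w, η j⟫ = 0 := by
    intro j hj
    rw [hw, inner_sub_left, hzη j hj, real_inner_comm, sub_self]
  have hTz : T z = ∑ i ∈ s, (⟪η i, u⟫ * μ i) • η i := by
    rw [hz, map_sum]
    exact Finset.sum_congr rfl fun i hi => by rw [map_smul, hTeig i hi, smul_smul]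
  have h1 : ⟪z, T z⟫ = ∑ i ∈ s, μ i * ⟪η i, u⟫ ^ 2 := by
    rw [hTz, inner_sum]
    refine Finset.sum_congr rfl fun i hi => ?_
    rw [real_inner_smul_right, real_inner_comm, hzη i hi, real_inner_comm u (η i)]
    ring
  have h2 : ⟪w, T z⟫ = 0 := by
    rw [hTz, inner_sum]
    refine Finset.sum_eq_zero fun i hi => ?_
    rw [real_inner_smul_right, hwη i hi, mul_zero]
  have h3 : ⟪z, T w⟫ = 0 := by
    rw [← hTsa, hTz, sum_inner]
    refine Finset.sum_eq_zero fun i hi => ?_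
    rw [real_inner_smul_left, real_inner_comm w (η i), hwη i hi, mul_zero]
  have h4 : 0 ≤ ⟪w, T w⟫ := hTpos w
  have hu : u = z + w := by rw [hw]; abel
  have hexp : ⟪u, T u⟫ = ⟪z, T z⟫ + ⟪z, T w⟫ + ⟪w, T z⟫ + ⟪w, T w⟫ := by
    conv_lhs => rw [hu]
    rw [map_add, inner_add_left, inner_add_right, inner_add_right]
    ring
  rw [hexp, h1, h2, h3]
  linarith

set_option maxHeartbeats 1600000 in
/-- With `E = span{η₁..η_{k−1}}`, `Q = span{q₁..q_k}` and
`D = (μ_{k−1}/μ_k)(1 − d₂(E,Φ)²) − ⟨η_k, q_k⟩² > 0`, every nonzero `v ∈ Q` satisfies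
`⟨v, T v⟩/⟨v, v⟩ ≥ μ_k (⟨η_k, q_k⟩² − 1/D)`. -/
theorem stmt12 {H : Type*} [NormedAddCommGroup H] [InnerProductSpace ℝ H] [CompleteSpace H]
    (T : H →L[ℝ] H)
    (hTsa : ∀ x y : H, ⟪T x, y⟫ = ⟪x, T y⟫)
    (hTpos : ∀ u : H, 0 ≤ ⟪u, T u⟫)
    (r : ℕ) (hr : 1 ≤ r) (η : ℕ → H) (μ : ℕ → ℝ)
    (hη : ∀ i ∈ Set.Icc 1 r, ∀ j ∈ Set.Icc 1 r, ⟪η i, η j⟫ = if i = j then (1 : ℝ) else 0)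
    (hTeig : ∀ i ∈ Set.Icc 1 r, T (η i) = μ i • η i)
    (hμmono : ∀ i ∈ Set.Icc 1 (r + 1), ∀ j ∈ Set.Icc 1 (r + 1), i ≤ j → μ j ≤ μ i)
    (hμr : 0 < μ r) (hμr1 : 0 ≤ μ (r + 1))
    (hTinv : ∀ w ∈ (span ℝ (η '' Set.Icc 1 r))ᗮ, T w ∈ (span ℝ (η '' Set.Icc 1 r))ᗮ)
    (hTres : ∀ w ∈ (span ℝ (η '' Set.Icc 1 r))ᗮ, ⟪w, T w⟫ ≤ μ (r + 1) * ‖w‖ ^ 2)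
    (n : ℕ) (Φ : Submodule ℝ H) (hΦfd : FiniteDimensional ℝ Φ) (hΦn : Module.finrank ℝ Φ = n)
    (hlin : LinearIndependent ℝ (fun i : Set.Icc 1 (min n r) => proj Φ (η i.1)))
    (q : ℕ → H)
    (hq : ∀ i ∈ Set.Icc 1 (min n r),
      q i = ‖proj Φ (η i) - ∑ l ∈ Finset.Ico 1 i, ⟪q l, η i⟫ • q l‖⁻¹ •
            (proj Φ (η i) - ∑ l ∈ Finset.Ico 1 i, ⟪q l, η i⟫ • q l))
    (k : ℕ) (hk2 : 2 ≤ k) (hkp : k ≤ min n r)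
    (hD : 0 < (μ (k - 1) / μ k) * (1 - d2 (span ℝ (η '' Set.Icc 1 (k - 1))) Φ ^ 2) -
      ⟪η k, q k⟫ ^ 2) :
    ∀ v ∈ span ℝ (q '' Set.Icc 1 k), v ≠ 0 →
      μ k * (⟪η k, q k⟫ ^ 2 -
          1 / ((μ (k - 1) / μ k) * (1 - d2 (span ℝ (η '' Set.Icc 1 (k - 1))) Φ ^ 2) -
            ⟪η k, q k⟫ ^ 2)) ≤
        ⟪v, T v⟫ / ⟪v, v⟫ := by
  intro v hv hvne
  classical
  have hkr : k ≤ r := le_trans hkp (min_le_right n r)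
  have hk1 : 1 ≤ k := le_trans (by norm_num) hk2
  have hk1' : 1 ≤ k - 1 := by omega
  have hkk : k - 1 + 1 = k := by omega
  haveI : CompleteSpace Φ := FiniteDimensional.complete ℝ Φ
  set E := span ℝ (η '' Set.Icc 1 (k - 1)) with hE
  haveI hEfd : FiniteDimensional ℝ E :=
    FiniteDimensional.span_of_finite ℝ ((Set.finite_Icc 1 (k - 1)).image η)
  haveI : CompleteSpace E := FiniteDimensional.complete ℝ E
  set f : ℕ → H := fun i => proj Φ (η i) with hf
  have hfΦ : ∀ i, f i ∈ Φ := by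
    intro i
    rw [hf]
    simp only [proj_apply]
    exact SetLike.coe_mem _
  have hfη : ∀ i, ∀ x ∈ Φ, ⟪x, η i⟫ = ⟪x, f i⟫ := by
    intro i x hx
    have hmem := sub_starProjection_mem_orthogonal (K := Φ) (η i)
    have h0 : ⟪x, η i - f i⟫ = 0 := by
      rw [hf]
      simp only [proj_apply]
      exact (Submodule.mem_orthogonal Φ _).1 hmem x hx
    rw [inner_sub_right] at h0
    linarith
  have hlin' : ∀ i ∈ Set.Icc 1 (min n r), f i ∉ span ℝ (f '' Set.Ico 1 i) := by
    intro i hi hmem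
    have himg : (fun j : Set.Icc 1 (min n r) => f j.1) '' {j : Set.Icc 1 (min n r) | j.1 < i}
        = f '' Set.Ico 1 i := by
      ext y
      constructor
      · rintro ⟨⟨j, hj⟩, hjlt, rfl⟩
        exact ⟨j, ⟨hj.1, hjlt⟩, rfl⟩
      · rintro ⟨j, hj, rfl⟩
        exact ⟨⟨j, ⟨hj.1, le_trans (le_of_lt hj.2) hi.2⟩⟩, hj.2, rfl⟩
    have hnot := hlin.notMem_span_image (s := {j : Set.Icc 1 (min n r) | j.1 < i})
      (x := ⟨i, hi⟩) (by simp)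
    rw [himg] at hnot
    exact hnot hmem
  have GS := aux_gs Φ η f q (min n r) hfΦ hfη hlin' hq
  have hqfacts : ∀ i, 1 ≤ i → i ≤ k →
      q i ∈ Φ ∧ ‖q i‖ = 1 ∧ q i ∈ span ℝ (f '' Set.Icc 1 i) ∧
        f i ∈ span ℝ (q '' Set.Icc 1 i) ∧ ∀ j, 1 ≤ j → j < i → ⟪q j, q i⟫ = 0 :=
    fun i h1 h2 => GS i ⟨h1, le_trans h2 hkp⟩
  have horth : ∀ i j, 1 ≤ i → i ≤ k → 1 ≤ j → j ≤ k →
      ⟪q i, q j⟫ = if i = j then (1:ℝ) else 0 := by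
    intro i j hi1 hik hj1 hjk
    rcases lt_trichotomy i j with h | h | h
    · rw [if_neg (Nat.ne_of_lt h)]
      exact (hqfacts j hj1 hjk).2.2.2.2 i hi1 h
    · subst h
      rw [if_pos rfl, real_inner_self_eq_norm_sq, (hqfacts i hi1 hik).2.1, one_pow]
    · rw [if_neg (Nat.ne_of_gt h), real_inner_comm]
      exact (hqfacts i hi1 hik).2.2.2.2 j hj1 h
  have horthF : ∀ i ∈ Finset.Icc 1 k, ∀ j ∈ Finset.Icc 1 k,
      ⟪q i, q j⟫ = if i = j then (1:ℝ) else 0 := by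
    intro i hi j hj
    rw [Finset.mem_Icc] at hi hj
    exact horth i j hi.1 hi.2 hj.1 hj.2
  have hηF : ∀ i ∈ Finset.Icc 1 r, ∀ j ∈ Finset.Icc 1 r,
      ⟪η i, η j⟫ = if i = j then (1:ℝ) else 0 := by
    intro i hi j hj
    rw [Finset.mem_Icc] at hi hj
    exact hη i ⟨hi.1, hi.2⟩ j ⟨hj.1, hj.2⟩
  have hηFk : ∀ i ∈ Finset.Icc 1 k, ∀ j ∈ Finset.Icc 1 k,
      ⟪η i, η j⟫ = if i = j then (1:ℝ) else 0 := by
    intro i hi j hj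
    rw [Finset.mem_Icc] at hi hj
    exact hη i ⟨hi.1, le_trans hi.2 hkr⟩ j ⟨hj.1, le_trans hj.2 hkr⟩
  have hηFk1 : ∀ i ∈ Finset.Icc 1 (k - 1), ∀ j ∈ Finset.Icc 1 (k - 1),
      ⟪η i, η j⟫ = if i = j then (1:ℝ) else 0 := by
    intro i hi j hj
    rw [Finset.mem_Icc] at hi hj
    exact hη i ⟨hi.1, by omega⟩ j ⟨hj.1, by omega⟩
  -- q k is orthogonal to η i for i ≤ k-1
  have hqkE : ∀ i, 1 ≤ i → i ≤ k - 1 → ⟪q k, η i⟫ = 0 := by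
    intro i h1 h2
    have hqk_ql : ∀ y ∈ q '' Set.Icc 1 i, ⟪q k, y⟫ = 0 := by
      rintro y ⟨l, hl, rfl⟩
      obtain ⟨hl1, hl2⟩ := hl
      have h3 := horth l k hl1 (by omega) hk1 le_rfl
      rw [real_inner_comm, h3, if_neg (by omega)]
    have h3 := aux_inner_span_zero hqk_ql (f i) (hqfacts i h1 (by omega)).2.2.2.1
    rw [hfη i (q k) (hqfacts k hk1 le_rfl).1]
    exact h3
  -- decomposition of v
  set a : ℕ → ℝ := fun i => ⟪q i, v⟫ with ha
  set w := ∑ i ∈ Finset.Icc 1 (k - 1), a i • q i with hwdef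
  have hsplit : ∑ i ∈ Finset.Icc 1 k, a i • q i = w + a k • q k := by
    have h4 := Finset.sum_Icc_succ_top (a := 1) (b := k - 1) (by omega)
      (fun i => a i • q i)
    rw [hkk] at h4
    rw [h4, hwdef]
  have hu0 : v - ∑ i ∈ Finset.Icc 1 k, a i • q i = 0 := by
    set u0 := v - ∑ i ∈ Finset.Icc 1 k, a i • q i with hu0def
    have hu0span : u0 ∈ span ℝ (q '' Set.Icc 1 k) := by
      refine sub_mem hv (sum_mem fun i hi => smul_mem _ _ (subset_span ?_))
      rw [Finset.mem_Icc] at hi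
      exact ⟨i, ⟨hi.1, hi.2⟩, rfl⟩
    have hu0orth : ∀ y ∈ q '' Set.Icc 1 k, ⟪u0, y⟫ = 0 := by
      rintro y ⟨j, hj, rfl⟩
      have hjF : j ∈ Finset.Icc 1 k := Finset.mem_Icc.2 ⟨hj.1, hj.2⟩
      rw [hu0def, inner_sub_left, aux_delta _ _ horthF a hjF, ha]
      rw [real_inner_comm, sub_self]
    exact inner_self_eq_zero.1 (aux_inner_span_zero hu0orth u0 hu0span)
  have hveq : v = w + a k • q k := by
    rw [← hsplit]
    have := sub_eq_zero.1 hu0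
    exact this
  have hqkq : ⟪q k, q k⟫ = 1 := by
    have h4 := horth k k hk1 le_rfl hk1 le_rfl
    rwa [if_pos rfl] at h4
  have hwqk : ⟪w, q k⟫ = 0 := by
    rw [hwdef, sum_inner]
    refine Finset.sum_eq_zero fun i hi => ?_
    rw [Finset.mem_Icc] at hi
    rw [real_inner_smul_left, horth i k hi.1 (by omega) hk1 le_rfl,
      if_neg (by omega), mul_zero]
  have hN : ⟪v, v⟫ = ⟪w, w⟫ + a k ^ 2 := by
    have h1 : ⟪q k, w⟫ = 0 := (real_inner_comm w (q k)).trans hwqk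
    rw [hveq]
    simp only [inner_add_left, inner_add_right, real_inner_smul_left,
      real_inner_smul_right]
    rw [hwqk, h1, hqkq]
    ring
  set c := ⟪η k, q k⟫ with hc
  set t := ⟪η k, w⟫ with ht
  have hηv : ∀ i ∈ Finset.Icc 1 (k - 1), ⟪η i, v⟫ = ⟪η i, w⟫ := by
    intro i hi
    rw [Finset.mem_Icc] at hi
    have h5 : ⟪η i, q k⟫ = 0 := by
      rw [real_inner_comm]
      exact hqkE i hi.1 hi.2
    rw [hveq, inner_add_right, real_inner_smul_right, h5, mul_zero, add_zero]
  have hηkv : ⟪η k, v⟫ = t + a k * c := by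
    rw [hveq, inner_add_right, real_inner_smul_right, ht, hc]
  set X2 := ∑ i ∈ Finset.Icc 1 (k - 1), ⟪η i, w⟫ ^ 2 with hX2
  have hBessel : X2 + t ^ 2 ≤ ⟪w, w⟫ := by
    have hb := aux_bessel (Finset.Icc 1 k) η hηFk w
    have h4 := Finset.sum_Icc_succ_top (a := 1) (b := k - 1) (by omega)
      (fun i => ⟪η i, w⟫ ^ 2)
    rw [hkk] at h4
    rw [h4] at hb
    rw [hX2, ht]
    exact hb
  -- gap bound (Claim B)
  have hwW : w ∈ span ℝ (f '' Set.Icc 1 (k - 1)) := by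
    refine sum_mem fun i hi => smul_mem _ _ ?_
    rw [Finset.mem_Icc] at hi
    refine span_mono (Set.image_mono ?_) (hqfacts i hi.1 (by omega)).2.2.1
    intro x hx
    exact ⟨hx.1, le_trans hx.2 hi.2⟩
  have hgap : (1 - d2 E Φ ^ 2) * ⟪w, w⟫ ≤ X2 := by
    have hmapE : span ℝ (f '' Set.Icc 1 (k - 1)) = Submodule.map (proj Φ : H →ₗ[ℝ] H) E := by
      rw [hE, Submodule.map_span]
      congr 1
      rw [Set.image_image]
      rfl
    rw [hmapE] at hwW
    obtain ⟨e, heE, hew⟩ := hwW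
    replace hew : proj Φ e = w := hew
    have hwΦ : w ∈ Φ := by
      rw [← hew]
      simp only [proj_apply]
      exact SetLike.coe_mem _
    have hmemo : e - w ∈ Φᗮ := by
      have h5 : e - (orthogonalProjection Φ e : H) ∈ Φᗮ := sub_starProjection_mem_orthogonal (K := Φ) e
      rw [← proj_apply, hew] at h5
      exact h5
    have h_ew : ⟪w, e - w⟫ = 0 := (Submodule.mem_orthogonal Φ _).1 hmemo w hwΦ
    have hiew : ⟪e, w⟫ = ⟪w, w⟫ := by
      rw [inner_sub_right] at h_ew
      rw [real_inner_comm]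
      linarith
    have hee : ⟪e, e⟫ = ⟪w, w⟫ + ⟪e - w, e - w⟫ := by
      have h6 : ⟪e - w, w⟫ = 0 := by rw [real_inner_comm]; exact h_ew
      have h7 : ⟪e, e⟫ = ⟪w + (e - w), w + (e - w)⟫ := by
        congr 1 <;> abel
      rw [h7]
      simp only [inner_add_left, inner_add_right]
      rw [h6, h_ew]
      ring
    set P := ∑ i ∈ Finset.Icc 1 (k - 1), ⟪η i, w⟫ • η i with hP
    have hPP : ⟪P, P⟫ = X2 := aux_sumsq _ _ hηFk1 _
    have hwPorth : ∀ y ∈ η '' Set.Icc 1 (k - 1), ⟪w - P, y⟫ = 0 := by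
      rintro y ⟨j, hj, rfl⟩
      have hjF : j ∈ Finset.Icc 1 (k - 1) := Finset.mem_Icc.2 ⟨hj.1, hj.2⟩
      rw [inner_sub_left, hP, aux_delta _ _ hηFk1 _ hjF, real_inner_comm, sub_self]
    have hePw := aux_inner_span_zero hwPorth e heE
    have hew2 : ⟪e, P⟫ = ⟪w, w⟫ := by
      rw [inner_sub_left] at hePw
      have h8 : ⟪w, e⟫ = ⟪w, w⟫ := (real_inner_comm e w).trans hiew
      have h9 : ⟪e, P⟫ = ⟪P, e⟫ := real_inner_comm P e
      linarith
    have hCS : ⟪e, P⟫ * ⟪e, P⟫ ≤ ⟪e, e⟫ * ⟪P, P⟫ := real_inner_mul_inner_self_le e P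
    rw [hew2, hPP] at hCS
    have hopn : ‖e - w‖ ≤ d2 E Φ * ‖e‖ := by
      have he1 : proj E e = e := by
        rw [proj_apply]
        exact starProjection_eq_self_iff.2 heE
      have he2 : proj Φᗮ e = e - w := by
        rw [proj_apply]
        exact (starProjection_orthogonal_val (K := Φ) e).trans (by rw [← hew, proj_apply]; rfl)
      have hcomp : (proj Φᗮ ∘L proj E) e = e - w := by
        rw [ContinuousLinearMap.comp_apply, he1, he2]
      calc ‖e - w‖ = ‖(proj Φᗮ ∘L proj E) e‖ := by rw [hcomp]
        _ ≤ ‖proj Φᗮ ∘L proj E‖ * ‖e‖ := (proj Φᗮ ∘L proj E).le_opNorm e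
        _ = d2 E Φ * ‖e‖ := rfl
    have hEW : ⟪e - w, e - w⟫ ≤ d2 E Φ ^ 2 * ⟪e, e⟫ := by
      rw [real_inner_self_eq_norm_sq, real_inner_self_eq_norm_sq]
      nlinarith [norm_nonneg (e - w), norm_nonneg e]
    have hW0 : (0:ℝ) ≤ ⟪w, w⟫ := real_inner_self_nonneg
    have hE0 : (0:ℝ) ≤ ⟪e, e⟫ := real_inner_self_nonneg
    have hX20 : (0:ℝ) ≤ X2 := by
      rw [hX2]
      exact Finset.sum_nonneg fun i _ => sq_nonneg _
    have key2 : (1 - d2 E Φ ^ 2) * ⟪e, e⟫ ≤ ⟪w, w⟫ := by linarith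
    rcases le_or_gt (1 - d2 E Φ ^ 2) 0 with hcase | hcase
    · exact le_trans (mul_nonpos_of_nonpos_of_nonneg hcase hW0) hX20
    · rcases eq_or_lt_of_le hE0 with hcE | hcE
      · have hw00 : ⟪w, w⟫ = 0 := le_antisymm (by nlinarith) hW0
        rw [hw00, mul_zero]
        exact hX20
      · nlinarith [mul_le_mul_of_nonneg_right key2 hW0]
  -- eigenvalue facts
  have hμpos : 0 < μ k :=
    lt_of_lt_of_le hμr (hμmono k ⟨hk1, by omega⟩ r ⟨hr, by omega⟩ hkr)
  have hμk1 : μ k ≤ μ (k - 1) :=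
    hμmono (k - 1) ⟨hk1', by omega⟩ k ⟨hk1, by omega⟩ (by omega)
  have hμnn : ∀ i ∈ Finset.Icc 1 r, 0 ≤ μ i := by
    intro i hi
    rw [Finset.mem_Icc] at hi
    exact le_trans hμr.le (hμmono i ⟨hi.1, by omega⟩ r ⟨hr, by omega⟩ hi.2)
  have hTeigF : ∀ i ∈ Finset.Icc 1 r, T (η i) = μ i • η i := by
    intro i hi
    rw [Finset.mem_Icc] at hi
    exact hTeig i ⟨hi.1, hi.2⟩
  have hA := aux_claimA T hTsa hTpos r η μ hηF hTeigF v
  have hsum1 : ∑ i ∈ Finset.Icc 1 k, μ i * ⟪η i, v⟫ ^ 2 ≤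
      ∑ i ∈ Finset.Icc 1 r, μ i * ⟪η i, v⟫ ^ 2 := by
    refine Finset.sum_le_sum_of_subset_of_nonneg (Finset.Icc_subset_Icc_right hkr) ?_
    intro i hi _
    exact mul_nonneg (hμnn i hi) (sq_nonneg _)
  have hsum2 : ∑ i ∈ Finset.Icc 1 k, μ i * ⟪η i, v⟫ ^ 2 =
      (∑ i ∈ Finset.Icc 1 (k - 1), μ i * ⟪η i, v⟫ ^ 2) + μ k * ⟪η k, v⟫ ^ 2 := by
    have h4 := Finset.sum_Icc_succ_top (a := 1) (b := k - 1) (by omega)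
      (fun i => μ i * ⟪η i, v⟫ ^ 2)
    rw [hkk] at h4
    exact h4
  have hsum3 : μ (k - 1) * X2 ≤ ∑ i ∈ Finset.Icc 1 (k - 1), μ i * ⟪η i, v⟫ ^ 2 := by
    rw [hX2, Finset.mul_sum]
    refine Finset.sum_le_sum fun i hi => ?_
    rw [← hηv i hi]
    refine mul_le_mul_of_nonneg_right ?_ (sq_nonneg _)
    rw [Finset.mem_Icc] at hi
    exact hμmono i ⟨hi.1, by omega⟩ (k - 1) ⟨hk1', by omega⟩ hi.2
  have hmain : μ (k - 1) * X2 + μ k * (t + a k * c) ^ 2 ≤ ⟪v, T v⟫ := by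
    rw [← hηkv]
    linarith
  -- scalar inequality
  have hcnorm : c ^ 2 ≤ 1 := by
    have hCS := real_inner_mul_inner_self_le (η k) (q k)
    have h5 : ⟪η k, η k⟫ = 1 := by
      have := hη k ⟨hk1, hkr⟩ k ⟨hk1, hkr⟩
      rwa [if_pos rfl] at this
    rw [h5, hqkq] at hCS
    rw [hc, sq]
    linarith
  have hsc := aux_scalar (R := μ (k - 1) / μ k) (g := 1 - d2 E Φ ^ 2) (c := c)
    (S := ⟪w, w⟫) (a := a k) (t := t) (X2 := X2)
    ((one_le_div hμpos).2 hμk1)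
    (by nlinarith [sq_nonneg (d2 E Φ)])
    hcnorm hD real_inner_self_nonneg hgap hBessel
  have hvv : 0 < ⟪v, v⟫ := by
    rw [real_inner_self_eq_norm_sq]
    exact pow_pos (norm_pos_iff.2 hvne) 2
  rw [le_div_iff₀ hvv]
  calc μ k * (c ^ 2 - 1 / ((μ (k - 1) / μ k) * (1 - d2 E Φ ^ 2) - c ^ 2)) * ⟪v, v⟫
      = μ k * ((c ^ 2 - 1 / ((μ (k - 1) / μ k) * (1 - d2 E Φ ^ 2) - c ^ 2)) *
        (⟪w, w⟫ + a k ^ 2)) := by rw [hN]; ring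
    _ ≤ μ k * ((μ (k - 1) / μ k) * X2 + (a k * c + t) ^ 2) :=
        mul_le_mul_of_nonneg_left hsc hμpos.le
    _ = μ (k - 1) * X2 + μ k * (t + a k * c) ^ 2 := by
        field_simp
        ring
    _ ≤ ⟪v, T v⟫ := hmain


end
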